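/- Let Q₁ ∈ CRPQ(a) with the single canonical model K (variables as nodes, one edge per atom), and let Q₂ be any CRPQ. Then Q₁ ⊆ Q₂ if and only if there is a satisfying homomorphism from Q₂ to K mapping each distinguished variable of Q₂ to the corresponding distinguished variable of Q₁. -/

import Mathlib

/-- A knowledge base: a finite, edge-labeled directed graph over the label set `Λ`. -/
structure KB (Λ : Type) : Type 1 where
  /-- the nodes -/
  V : Type
  /-- there are finitely many nodes -/
  fin : Fintype V
  /-- the labeled edges -/
  E : V → Λ → V → Prop

/-- `IsWalk E x y p`: `p` is a path (list of labeled edges, each in `E`) from `x` to `y`. -/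
def IsWalk {V Λ : Type} (E : V → Λ → V → Prop) : V → V → List (V × Λ × V) → Prop
  | x, y, [] => x = y
  | x, y, e :: p => x = e.1 ∧ E e.1 e.2.1 e.2.2 ∧ IsWalk E e.2.2 y p

/-- The label of a path: the word formed by its edge labels. -/
def walkLabel {V Λ : Type} (p : List (V × Λ × V)) : List Λ := p.map fun e => e.2.1

/-- A conjunctive regular path query `Q(x₁, …, x_n) ← ⋀ᵢ y_{2i−1} Rᵢ y_{2i}`:
finitely many variables, a list of distinguished variables (each of which occurs in some
atom), and a list of atoms `(y, R, z)` with `R` a regular expression. -/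
structure CRPQ (Λ : Type) : Type 1 where
  /-- the variables -/
  Var : Type
  /-- there are finitely many variables -/
  finVar : Fintype Var
  /-- the distinguished variables `x₁, …, x_n` -/
  dist : List Var
  /-- the atoms `y R z` -/
  atoms : List (Var × RegularExpression Λ × Var)
  /-- every distinguished variable occurs in some atom -/
  dist_mem : ∀ x ∈ dist, ∃ t ∈ atoms, x = t.1 ∨ x = t.2.2

/-- `μ` is a satisfying homomorphism (embedding) from `Q` to `K`: every atom `y R z` is
witnessed by a path from `μ y` to `μ z` whose label lies in `L(R)`. -/
def Sat {Λ : Type} (Q : CRPQ Λ) (K : KB Λ) (μ : Q.Var → K.V) : Prop :=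
  ∀ t ∈ Q.atoms, ∃ p, IsWalk K.E (μ t.1) (μ t.2.2) p ∧ walkLabel p ∈ t.2.1.matches'

/-- The set of answers of `Q` over `K`: tuples of nodes realized by a satisfying
homomorphism on the distinguished variables. -/
def ans {Λ : Type} (Q : CRPQ Λ) (K : KB Λ) : Set (List K.V) :=
  { tup | ∃ μ : Q.Var → K.V, Sat Q K μ ∧ tup = Q.dist.map μ }

/-- `Q₁ ⊆ Q₂`: over every knowledge base, every answer of `Q₁` is an answer of `Q₂`. -/
def Contained {Λ : Type} (Q₁ Q₂ : CRPQ Λ) : Prop :=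
  ∀ K : KB Λ, ans Q₁ K ⊆ ans Q₂ K

/-- The node sequence of a path starting at `s`. -/
def nodeSeq {V Λ : Type} (s : V) (p : List (V × Λ × V)) : List V :=
  s :: p.map fun e => e.2.2

/-- A path is simple if its nodes are pairwise distinct, except that its start and end
node may coincide. -/
def IsSimplePath {V Λ : Type} (s : V) (p : List (V × Λ × V)) : Prop :=
  ∀ j k : Fin (nodeSeq s p).length, j < k →
    (nodeSeq s p).get j = (nodeSeq s p).get k →
      j.val = 0 ∧ k.val = (nodeSeq s p).length - 1

/-- The internal nodes of a path (its node sequence without start and end node). -/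
def internals {V Λ : Type} (s : V) (p : List (V × Λ × V)) : List V :=
  ((nodeSeq s p).drop 1).dropLast

/-- `K` is `ν`-canonical for `Q`: `K` consists exactly of one simple path per atom of
`Q`, these paths being node- and edge-disjoint except for their start and end nodes,
where the path for atom `y R z` connects `ν y` to `ν z` and its label lies in `L(R)`. -/
def IsCanonical {Λ : Type} (Q : CRPQ Λ) (K : KB Λ) (ν : Q.Var → K.V) : Prop :=
  ∃ π : Fin Q.atoms.length → List (K.V × Λ × K.V),
    (∀ i, IsWalk K.E (ν (Q.atoms.get i).1) (ν (Q.atoms.get i).2.2) (π i)) ∧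
    (∀ i, walkLabel (π i) ∈ (Q.atoms.get i).2.1.matches') ∧
    (∀ i, IsSimplePath (ν (Q.atoms.get i).1) (π i)) ∧
    (∀ i i', i ≠ i' → ∀ v ∈ internals (ν (Q.atoms.get i).1) (π i),
        v ∉ nodeSeq (ν (Q.atoms.get i').1) (π i')) ∧
    (∀ i i', i ≠ i' → ∀ e ∈ π i, e ∉ π i') ∧
    (∀ x a y, K.E x a y ↔ ∃ i, (x, a, y) ∈ π i) ∧
    (∀ v : K.V, ∃ i, v ∈ nodeSeq (ν (Q.atoms.get i).1) (π i))

/-- The single canonical model of a `CRPQ(a)` query `Q₁`: nodes are the variables of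
`Q₁`, with one edge `(y, a, z)` per atom `y a z`. -/
def queryGraph {Λ : Type} (Q : CRPQ Λ) : KB Λ :=
  ⟨Q.Var, Q.finVar, fun x a y => (x, RegularExpression.char a, y) ∈ Q.atoms⟩

lemma isWalk_append {V Λ : Type} {E : V → Λ → V → Prop} :
    ∀ {p : List (V × Λ × V)} {x y z : V} {q : List (V × Λ × V)},
      IsWalk E x y p → IsWalk E y z q → IsWalk E x z (p ++ q)
  | [], x, y, z, q, hp, hq => by
      cases hp; exact hq
  | e :: p, x, y, z, q, hp, hq => by
    obtain ⟨h1, h2, h3⟩ := hp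
    exact ⟨h1, h2, isWalk_append h3 hq⟩

lemma walkLabel_append {V Λ : Type} (p q : List (V × Λ × V)) :
    walkLabel (p ++ q) = walkLabel p ++ walkLabel q := List.map_append

/-- Transfer a walk in the query graph to any model of `Q₁`. -/
lemma walk_transfer {Λ : Type} (Q₁ : CRPQ Λ) (K : KB Λ) (ν : Q₁.Var → K.V)
    (hν : Sat Q₁ K ν) :
    ∀ (p : List (Q₁.Var × Λ × Q₁.Var)) (x y : Q₁.Var),
      IsWalk (queryGraph Q₁).E x y p →
      ∃ q, IsWalk K.E (ν x) (ν y) q ∧ walkLabel q = walkLabel p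
  | [], x, y, hw => by
      cases hw; exact ⟨[], rfl, rfl⟩
  | e :: p, x, y, hw => by
    obtain ⟨h1, h2, h3⟩ := hw
    obtain ⟨w, hw1, hw2⟩ := hν (e.1, RegularExpression.char e.2.1, e.2.2) h2
    rw [RegularExpression.matches'_char] at hw2; replace hw2 : walkLabel w = [e.2.1] := hw2
    obtain ⟨q, hq1, hq2⟩ := walk_transfer Q₁ K ν hν p e.2.2 y h3
    subst h1
    refine ⟨w ++ q, isWalk_append hw1 hq1, ?_⟩
    rw [walkLabel_append, hw2, hq2]; rfl

/-- Let `Q₁ ∈ CRPQ(a)` (every atom a single symbol, every variable occurring in some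
atom) with single canonical model `K = queryGraph Q₁`, and let `Q₂` be any CRPQ. Then
`Q₁ ⊆ Q₂` iff there is a satisfying homomorphism from `Q₂` to `K` mapping the
distinguished variables of `Q₂` to the corresponding distinguished variables of `Q₁`. -/
theorem containment_of_crpq_a_iff_homomorphism {Λ : Type} (Q₁ Q₂ : CRPQ Λ)
    (hchar : ∀ t ∈ Q₁.atoms, ∃ a : Λ, t.2.1 = RegularExpression.char a)
    (hcov : ∀ x : Q₁.Var, ∃ t ∈ Q₁.atoms, x = t.1 ∨ x = t.2.2) :
    Contained Q₁ Q₂ ↔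
      ∃ μ : Q₂.Var → (queryGraph Q₁).V,
        Sat Q₂ (queryGraph Q₁) μ ∧ Q₂.dist.map μ = Q₁.dist := by
  constructor
  · intro hc
    have hidsat : Sat Q₁ (queryGraph Q₁) id := by
      intro t ht
      obtain ⟨a, ha⟩ := hchar t ht
      refine ⟨[(t.1, a, t.2.2)], ⟨rfl, ?_, rfl⟩, ?_⟩
      · show (t.1, RegularExpression.char a, t.2.2) ∈ Q₁.atoms
        have : t = (t.1, RegularExpression.char a, t.2.2) := by
          obtain ⟨x, R, y⟩ := t; simp_all
        rwa [← this]
      · rw [ha, RegularExpression.matches'_char]; rfl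
    have hans : Q₁.dist ∈ ans Q₁ (queryGraph Q₁) :=
      ⟨id, hidsat, by exact (List.map_id _).symm⟩
    obtain ⟨μ, hμ1, hμ2⟩ := hc (queryGraph Q₁) hans
    exact ⟨μ, hμ1, hμ2.symm⟩
  · rintro ⟨μ, hμ, hdist⟩ K tup ⟨ν, hν, htup⟩
    refine ⟨ν ∘ μ, ?_, ?_⟩
    · intro t ht
      obtain ⟨p, hp1, hp2⟩ := hμ t ht
      obtain ⟨q, hq1, hq2⟩ := walk_transfer Q₁ K ν hν p _ _ hp1
      exact ⟨q, hq1, hq2 ▸ hp2⟩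
    · rw [htup, ← hdist]; exact List.map_map
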